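/- arXiv:1403.3514 — 2 statements merged into one kernel-verified Lean document; each statement's English description precedes it below -/
import Mathlib

section
/- Define R_u = 1 + g T_u T_{u+1} where T_u = T [u]_x [u+3]_x/([u+1]_x [u+2]_x), T = (1+4x+x^2)/(1+x+x^2), g = x(1+x+x^2)/(1+4x+x^2)^2, and [u]_x = 1-x^u. Then R_u = ([2]_x)^2 [u+1]_x [u+3]_x / ([1]_x [3]_x ([u+2]_x)^2) as rational functions in x, for every natural number u. -/
noncomputable section

/-- The field of rational functions in one variable over ℚ. -/
abbrev K := RatFunc ℚ

/-- The formal variable x. -/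
def x : K := RatFunc.X

/-- [s]_x = 1 - x^s. -/
def br (s : ℕ) : K := 1 - x ^ s

/-- T = (1+4x+x²)/(1+x+x²). -/
def T : K := (1 + 4 * x + x ^ 2) / (1 + x + x ^ 2)

/-- g = x(1+x+x²)/(1+4x+x²)². -/
def g : K := x * (1 + x + x ^ 2) / (1 + 4 * x + x ^ 2) ^ 2

/-- T_s = T [s]_x [s+3]_x / ([s+1]_x [s+2]_x). -/
def Ts (s : ℕ) : K := T * br s * br (s + 3) / (br (s + 1) * br (s + 2))

/-- N_{s,t}. -/
def N (s t : ℕ) : K :=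
  br 3 * br (s + 2) * br (t + 2) * br (s + t + 3) /
    (br 2 * br (s + 3) * br (t + 3) * br (s + t + 2))

/-- X_{s,t}. -/
def Xc (s t : ℕ) : K :=
  br 3 * br (s + 1) * br (t + 1) * br (s + t + 3) /
    (br 1 * br (s + 3) * br (t + 3) * br (s + t + 1))

open Polynomial in
lemma coe_ne {p : ℚ[X]} (hp : p ≠ 0) : (algebraMap ℚ[X] K p) ≠ 0 :=
  (map_ne_zero_iff _ (IsFractionRing.injective ℚ[X] K)).mpr hp

open Polynomial in
lemma br_ne {s : ℕ} (hs : s ≠ 0) : br s ≠ 0 := by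
  have h : br s = algebraMap ℚ[X] K (1 - Polynomial.X ^ s) := by
    rw [map_sub, map_pow, map_one, RatFunc.algebraMap_X]; rfl
  rw [h]
  apply coe_ne
  intro h0
  have := congrArg (Polynomial.eval 0) h0
  simp [zero_pow hs] at this

open Polynomial in
lemma q1_ne : (1 + x + x ^ 2 : K) ≠ 0 := by
  have h : (1 + x + x ^ 2 : K) = algebraMap ℚ[X] K (1 + Polynomial.X + Polynomial.X ^ 2) := by
    rw [map_add, map_add, map_pow, map_one, RatFunc.algebraMap_X]; rfl
  rw [h]
  apply coe_ne
  intro h0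
  have := congrArg (Polynomial.eval 0) h0
  simp at this

open Polynomial in
lemma q4_ne : (1 + 4 * x + x ^ 2 : K) ≠ 0 := by
  have h : (1 + 4 * x + x ^ 2 : K)
      = algebraMap ℚ[X] K (1 + 4 * Polynomial.X + Polynomial.X ^ 2) := by
    rw [map_add, map_add, map_mul, map_pow, map_one, map_ofNat, RatFunc.algebraMap_X]; rfl
  rw [h]
  apply coe_ne
  intro h0
  have := congrArg (Polynomial.eval 0) h0
  simp at this

example (u : ℕ) : True := trivial

set_option maxHeartbeats 2000000 in
theorem R_closed_form_aux (u : ℕ) :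
    1 + (x * (1 + x + x ^ 2) / (1 + 4 * x + x ^ 2) ^ 2) *
      ((1 + 4 * x + x ^ 2) / (1 + x + x ^ 2) * br u * br (u + 3) / (br (u + 1) * br (u + 2))) *
      ((1 + 4 * x + x ^ 2) / (1 + x + x ^ 2) * br (u+1) * br (u + 4) / (br (u + 2) * br (u + 3))) =
      (br 2) ^ 2 * br (u + 1) * br (u + 3) / (br 1 * br 3 * (br (u + 2)) ^ 2) := by
  have hq1 : (1 + x + x ^ 2 : K) ≠ 0 := q1_ne
  have hq4 : (1 + 4 * x + x ^ 2 : K) ≠ 0 := q4_ne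
  have h1 : (1 - x : K) ≠ 0 := by simpa [br] using br_ne (s := 1) one_ne_zero
  have h2 : (1 - x ^ 2 : K) ≠ 0 := br_ne (by norm_num)
  have h3 : (1 - x ^ 3 : K) ≠ 0 := br_ne (by norm_num)
  have hu1 : (1 - x ^ u * x : K) ≠ 0 := by
    simpa [br, pow_add] using br_ne (s := u + 1) (Nat.succ_ne_zero u)
  have hu2 : (1 - x ^ u * x ^ 2 : K) ≠ 0 := by
    simpa [br, pow_add] using br_ne (s := u + 2) (by omega)
  have hu3 : (1 - x ^ u * x ^ 3 : K) ≠ 0 := by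
    simpa [br, pow_add] using br_ne (s := u + 3) (by omega)
  have hu4 : (1 - x ^ u * x ^ 4 : K) ≠ 0 := by
    simpa [br, pow_add] using br_ne (s := u + 4) (by omega)
  simp only [br, pow_add, pow_one]
  generalize hy : x ^ u = y at *
  field_simp
  have hB : ((1 + 4 * x + x ^ 2) ^ 2 * ((1 + x + x ^ 2) * ((1 - y * x) * (1 - y * x ^ 2))) *
      ((1 + x + x ^ 2) * ((1 - y * x ^ 2) * (1 - y * x ^ 3))) : K) ≠ 0 := by
    exact mul_ne_zero (mul_ne_zero (pow_ne_zero _ hq4)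
      (mul_ne_zero hq1 (mul_ne_zero hu1 hu2))) (mul_ne_zero hq1 (mul_ne_zero hu2 hu3))
  have hD : ((1 + x * 4 + x ^ 2) * (1 - x ^ 3 * y) * (1 - x * y) * (1 - x ^ 2 * y) ^ 2 : K) ≠ 0 := by
    rw [mul_comm x 4, mul_comm (x ^ 3) y, mul_comm x y, mul_comm (x ^ 2) y]
    exact mul_ne_zero (mul_ne_zero (mul_ne_zero hq4 hu3) hu1) (pow_ne_zero _ hu2)
  have hE : ((1 - x ^ 2 * y) ^ 2 : K) ≠ 0 := by
    rw [mul_comm (x ^ 2) y]; exact pow_ne_zero _ hu2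
  rw [add_div' _ _ _ hD, div_mul_eq_mul_div, div_mul_eq_mul_div, div_eq_div_iff hD hE]
  ring

theorem R_closed_form (u : ℕ) :
    1 + g * Ts u * Ts (u + 1) =
      (br 2) ^ 2 * br (u + 1) * br (u + 3) / (br 1 * br 3 * (br (u + 2)) ^ 2) := by
  exact R_closed_form_aux u
end
end

section
/- With [s]_x = 1 - x^s, X_{s,t} = ([3]_x [s+1]_x [t+1]_x [s+t+3]_x)/([1]_x [s+3]_x [t+3]_x [s+t+1]_x) and N_{s,t} = ([3]_x [s+2]_x [t+2]_x [s+t+3]_x)/([2]_x [s+3]_x [t+3]_x [s+t+2]_x), the difference O_{s,t} = X_{s,t} - N_{s,t} equals x [3]_x [s]_x [t]_x ([s+t+3]_x)^2 / ([2]_x [s+3]_x [t+3]_x [s+t+1]_x [s+t+2]_x), as an identity of rational functions in x, for all natural numbers s, t. -/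
noncomputable section

lemma br_ne_s5 (n : ℕ) (h : n ≠ 0) : br n ≠ 0 := by
  unfold br x
  rw [sub_ne_zero]
  intro he
  have hx : (RatFunc.X : K) = algebraMap (Polynomial ℚ) K Polynomial.X := rfl
  rw [hx, ← map_pow, ← map_one (algebraMap (Polynomial ℚ) K)] at he
  have := RatFunc.algebraMap_injective ℚ he
  have h1 := congrArg Polynomial.natDegree this
  simp [Polynomial.natDegree_X_pow] at h1
  exact h h1.symm

set_option maxHeartbeats 2000000 in
theorem O_closed_form (s t : ℕ) :
    Xc s t - N s t =
      x * br 3 * br s * br t * (br (s + t + 3)) ^ 2 /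
        (br 2 * br (s + 3) * br (t + 3) * br (s + t + 1) * br (s + t + 2)) := by
  have a1 := br_ne_s5 1 one_ne_zero
  have a2 := br_ne_s5 2 two_ne_zero
  have a3 := br_ne_s5 3 three_ne_zero
  have b1 := br_ne_s5 (s+1) (Nat.succ_ne_zero _)
  have b2 := br_ne_s5 (s+2) (Nat.succ_ne_zero _)
  have b3 := br_ne_s5 (s+3) (Nat.succ_ne_zero _)
  have c1 := br_ne_s5 (t+1) (Nat.succ_ne_zero _)
  have c2 := br_ne_s5 (t+2) (Nat.succ_ne_zero _)
  have c3 := br_ne_s5 (t+3) (Nat.succ_ne_zero _)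
  have d1 := br_ne_s5 (s+t+1) (Nat.succ_ne_zero _)
  have d2 := br_ne_s5 (s+t+2) (Nat.succ_ne_zero _)
  have d3 := br_ne_s5 (s+t+3) (Nat.succ_ne_zero _)
  have hB : br 1 * br (s+3) * br (t+3) * br (s+t+1) ≠ 0 :=
    mul_ne_zero (mul_ne_zero (mul_ne_zero a1 b3) c3) d1
  have hD : br 2 * br (s+3) * br (t+3) * br (s+t+2) ≠ 0 :=
    mul_ne_zero (mul_ne_zero (mul_ne_zero a2 b3) c3) d2
  have hE : br 2 * br (s+3) * br (t+3) * br (s+t+1) * br (s+t+2) ≠ 0 :=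
    mul_ne_zero (mul_ne_zero (mul_ne_zero (mul_ne_zero a2 b3) c3) d1) d2
  unfold Xc N
  rw [div_sub_div _ _ hB hD, div_eq_div_iff (mul_ne_zero hB hD) hE]
  unfold br x
  ring
end
end
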